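/- Let $x_1, x_2$ be i.i.d. with law $S\,\delta_0 + (1-S)\,\mathrm{Unif}(0,1]$ for $S \in [0,1)$. Then $\mathbb{E}[x_1 - x_2 \mid x_1 > x_2] - \mathbb{E}[x_1 - x_2 \mid x_1 \le x_2] = \frac{2}{3}\frac{1+2S}{(1+S)(1+S^2)}$. -/

import Mathlib

open MeasureTheory ProbabilityTheory

/-- The sparse-uniform mixture law `S·δ₀ + (1-S)·Unif(0,1]`. -/
noncomputable def mixLaw (S : ℝ) : Measure ℝ :=
  (ENNReal.ofReal S) • Measure.dirac 0 +
    (ENNReal.ofReal (1 - S)) • (volume.restrict (Set.Ioc (0:ℝ) 1))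

lemma integrable_of_bdd {α : Type*} [MeasurableSpace α] {μ : Measure α} [IsFiniteMeasure μ]
    {f : α → ℝ} (hm : AEStronglyMeasurable f μ) {C : ℝ} (h : ∀ᵐ x ∂μ, |f x| ≤ C) :
    Integrable f μ :=
  Integrable.mono' (integrable_const C) hm (by simpa [Real.norm_eq_abs] using h)

lemma abs_integral_le_one {ν : Measure ℝ} [IsProbabilityMeasure ν] {f : ℝ → ℝ}
    (h : ∀ᵐ y ∂ν, |f y| ≤ 1) : |∫ y, f y ∂ν| ≤ 1 := by
  rw [← Real.norm_eq_abs]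
  refine (norm_integral_le_of_norm_le (integrable_const (1:ℝ)) (h.mono fun y hy => ?_)).trans ?_
  · rw [Real.norm_eq_abs]; exact hy
  · simp

lemma mixLaw_prob (S : ℝ) (h0 : 0 ≤ S) (h1 : S ≤ 1) : IsProbabilityMeasure (mixLaw S) := by
  constructor
  simp only [mixLaw, Measure.add_apply, Measure.smul_apply, smul_eq_mul,
    Measure.dirac_apply_of_mem (Set.mem_univ (0:ℝ)),
    Measure.restrict_apply MeasurableSet.univ, Set.univ_inter, Real.volume_Ioc]
  rw [mul_one, sub_zero, ENNReal.ofReal_one, mul_one, ← ENNReal.ofReal_add h0 (by linarith)]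
  norm_num

lemma mixLaw_compl_Icc (S : ℝ) : mixLaw S (Set.Icc (0:ℝ) 1)ᶜ = 0 := by
  have hm : MeasurableSet (Set.Icc (0:ℝ) 1)ᶜ := measurableSet_Icc.compl
  simp only [mixLaw, Measure.add_apply, Measure.smul_apply, smul_eq_mul,
    Measure.dirac_apply' _ hm, Measure.restrict_apply hm]
  have : (Set.Icc (0:ℝ) 1)ᶜ ∩ Set.Ioc 0 1 = ∅ := by
    ext x; simp only [Set.mem_inter_iff, Set.mem_compl_iff, Set.mem_Icc, Set.mem_Ioc,
      Set.mem_empty_iff_false, iff_false]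
    rintro ⟨h, h1, h2⟩; exact h ⟨le_of_lt h1, h2⟩
  rw [Set.indicator_of_notMem (by simp), this]
  simp

lemma mixLaw_ae_Icc (S : ℝ) : ∀ᵐ x ∂(mixLaw S), x ∈ Set.Icc (0:ℝ) 1 := by
  rw [ae_iff]
  have : {a : ℝ | ¬ a ∈ Set.Icc (0:ℝ) 1} = (Set.Icc (0:ℝ) 1)ᶜ := rfl
  rw [this]; exact mixLaw_compl_Icc S

lemma integral_mixLaw (S : ℝ) (h0 : 0 ≤ S) (h1 : S ≤ 1) (f : ℝ → ℝ)
    (hf : Integrable f (volume.restrict (Set.Ioc (0:ℝ) 1))) :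
    ∫ x, f x ∂(mixLaw S) = S * f 0 + (1 - S) * ∫ x in Set.Ioc (0:ℝ) 1, f x := by
  have hd : Integrable f ((ENNReal.ofReal S) • Measure.dirac (0:ℝ)) := by
    refine Integrable.smul_measure ?_ (by simp)
    have he : f =ᵐ[Measure.dirac (0:ℝ)] fun _ => f 0 := by
      rw [MeasureTheory.ae_dirac_eq]; exact Filter.eventually_pure.2 rfl
    exact (integrable_const (f 0)).congr he.symm
  have hr : Integrable f ((ENNReal.ofReal (1-S)) • volume.restrict (Set.Ioc (0:ℝ) 1)) :=
    hf.smul_measure (by simp)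
  rw [mixLaw, integral_add_measure hd hr, integral_smul_measure, integral_smul_measure,
    integral_dirac, ENNReal.toReal_ofReal h0, ENNReal.toReal_ofReal (by linarith),
    smul_eq_mul, smul_eq_mul]

lemma unif_ind (x : ℝ) (hx : x ∈ Set.Icc (0:ℝ) 1) :
    ∫ y in Set.Ioc (0:ℝ) 1, (if y < x then (1:ℝ) else 0) = x := by
  obtain ⟨h0, h1⟩ := hx
  have he : (fun y => if y < x then (1:ℝ) else 0) = (Set.Iio x).indicator (fun _ => 1) := by
    funext y; by_cases h : y < x <;> simp [Set.indicator_apply, Set.mem_Iio, h]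
  rw [he, setIntegral_indicator measurableSet_Iio]
  have : Set.Ioc (0:ℝ) 1 ∩ Set.Iio x = Set.Ioo 0 x := by
    ext y; simp only [Set.mem_inter_iff, Set.mem_Ioc, Set.mem_Iio, Set.mem_Ioo]
    constructor
    · rintro ⟨⟨a, b⟩, c⟩; exact ⟨a, c⟩
    · rintro ⟨a, b⟩; exact ⟨⟨a, le_trans (le_of_lt b) h1⟩, b⟩
  rw [this]
  simp [Real.volume_Ioo, ENNReal.toReal_ofReal h0, h0]

lemma unif_max (x : ℝ) (hx : x ∈ Set.Icc (0:ℝ) 1) :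
    ∫ y in Set.Ioc (0:ℝ) 1, max (x - y) 0 = x^2/2 := by
  obtain ⟨h0, h1⟩ := hx
  rw [← intervalIntegral.integral_of_le zero_le_one,
    ← intervalIntegral.integral_add_adjacent_intervals (a := (0:ℝ)) (b := x) (c := 1)
      ((Continuous.max (by fun_prop) continuous_const).intervalIntegrable _ _)
      ((Continuous.max (by fun_prop) continuous_const).intervalIntegrable _ _)]
  have e1 : ∫ y in (0:ℝ)..x, max (x - y) 0 = ∫ y in (0:ℝ)..x, (x - y) := by
    apply intervalIntegral.integral_congr
    intro y hy
    rw [Set.uIcc_of_le h0] at hy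
    exact max_eq_left (by linarith [hy.1, hy.2])
  have e2 : ∫ y in x..(1:ℝ), max (x - y) 0 = 0 := by
    rw [intervalIntegral.integral_congr (g := fun _ => (0:ℝ)) ?_, intervalIntegral.integral_zero]
    intro y hy
    rw [Set.uIcc_of_le h1] at hy
    exact max_eq_right (by linarith [hy.1, hy.2])
  rw [e1, e2, intervalIntegral.integral_sub intervalIntegrable_const
    intervalIntegral.intervalIntegrable_id, intervalIntegral.integral_const,
    integral_id]
  simp only [smul_eq_mul]; ring

lemma unif_lin (S : ℝ) : ∫ x in Set.Ioc (0:ℝ) 1, (S + (1-S)*x) = S + (1-S)/2 := by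
  rw [← intervalIntegral.integral_of_le zero_le_one]
  rw [intervalIntegral.integral_add intervalIntegrable_const
    ((by fun_prop : Continuous fun x : ℝ => _).intervalIntegrable _ _),
    intervalIntegral.integral_const, intervalIntegral.integral_const_mul,
    integral_id]
  simp only [smul_eq_mul]; ring

lemma unif_quad (S : ℝ) : ∫ x in Set.Ioc (0:ℝ) 1, (S*x + (1-S)*(x^2/2)) = S/2 + (1-S)/6 := by
  rw [← intervalIntegral.integral_of_le zero_le_one]
  have : (fun x : ℝ => S*x + (1-S)*(x^2/2)) = fun x => S*x + ((1-S)/2)*x^2 := by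
    funext x; ring
  rw [this, intervalIntegral.integral_add ((by fun_prop : Continuous fun x : ℝ => _).intervalIntegrable _ _)
    ((by fun_prop : Continuous fun x : ℝ => _).intervalIntegrable _ _),
    intervalIntegral.integral_const_mul, intervalIntegral.integral_const_mul,
    integral_id, integral_pow]
  norm_num; ring

theorem stmt9 {Ω : Type*} [MeasureSpace Ω] [IsProbabilityMeasure (ℙ : Measure Ω)]
    (S : ℝ) (hS : S ∈ Set.Ico (0:ℝ) 1)
    (X1 X2 : Ω → ℝ) (hX1 : Measurable X1) (hX2 : Measurable X2)
    (hindep : IndepFun X1 X2)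
    (hL1 : Measure.map X1 ℙ = mixLaw S) (hL2 : Measure.map X2 ℙ = mixLaw S) :
    (∫ ω, (X1 ω - X2 ω) ∂(ℙ[|{ω | X2 ω < X1 ω}]))
      - (∫ ω, (X1 ω - X2 ω) ∂(ℙ[|{ω | X1 ω ≤ X2 ω}]))
      = (2/3) * ((1 + 2*S) / ((1 + S) * (1 + S^2))) := by
  obtain ⟨h0, hS1⟩ := hS
  have h1 : S ≤ 1 := le_of_lt hS1
  set μ : Measure ℝ := mixLaw S with hμ
  haveI : IsProbabilityMeasure μ := mixLaw_prob S h0 h1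
  set T : Ω → ℝ × ℝ := fun ω => (X1 ω, X2 ω) with hTdef
  have hTm : Measurable T := hX1.prodMk hX2
  have hT : Measure.map T ℙ = μ.prod μ := by
    rw [hTdef, (indepFun_iff_map_prod_eq_prod_map_map hX1.aemeasurable hX2.aemeasurable).mp hindep,
      hL1, hL2]
  set U : Set (ℝ × ℝ) := {p | p.2 < p.1} with hUdef
  have hUm : MeasurableSet U := measurableSet_lt measurable_snd measurable_fst
  set A : Set Ω := {ω | X2 ω < X1 ω} with hAdef
  have hAm : MeasurableSet A := measurableSet_lt hX2 hX1
  have hAc : {ω | X1 ω ≤ X2 ω} = Aᶜ := by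
    ext ω; simp [hAdef, not_lt]
  set F1 : ℝ × ℝ → ℝ := fun p => if p.2 < p.1 then 1 else 0 with hF1
  set F2 : ℝ × ℝ → ℝ := fun p => max (p.1 - p.2) 0 with hF2
  have mF1 : Measurable F1 := Measurable.ite hUm measurable_const measurable_const
  have mF2 : Measurable F2 := (measurable_fst.sub measurable_snd).max measurable_const
  -- a.e. membership in the unit square
  have haeP : ∀ᵐ p ∂(μ.prod μ), p ∈ Set.Icc (0:ℝ) 1 ×ˢ Set.Icc (0:ℝ) 1 := by
    rw [ae_iff]
    have hsub : {p : ℝ × ℝ | ¬ p ∈ Set.Icc (0:ℝ) 1 ×ˢ Set.Icc (0:ℝ) 1} ⊆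
        ((Set.Icc (0:ℝ) 1)ᶜ ×ˢ Set.univ) ∪ (Set.univ ×ˢ (Set.Icc (0:ℝ) 1)ᶜ) := by
      intro p hp
      simp only [Set.mem_setOf_eq, Set.mem_prod, not_and_or] at hp
      rcases hp with h | h
      · exact Or.inl ⟨h, Set.mem_univ _⟩
      · exact Or.inr ⟨Set.mem_univ _, h⟩
    refine measure_mono_null hsub (measure_union_null ?_ ?_) <;>
      rw [Measure.prod_prod] <;> simp [mixLaw_compl_Icc S, ← hμ] <;>
      exact (prob_compl_eq_zero_iff measurableSet_Icc).mp (mixLaw_compl_Icc S)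
  -- inner integrals
  have hinner1 : ∀ x ∈ Set.Icc (0:ℝ) 1,
      ∫ y, F1 (x, y) ∂μ = S * (if 0 < x then (1:ℝ) else 0) + (1-S) * x := by
    intro x hx
    have hint : Integrable (fun y => if y < x then (1:ℝ) else 0)
        (volume.restrict (Set.Ioc (0:ℝ) 1)) := by
      refine integrable_of_bdd (C := 1) ?_ (ae_of_all _ fun y => ?_)
      · exact (Measurable.ite measurableSet_Iio measurable_const
          measurable_const).aestronglyMeasurable
      · by_cases h : y < x <;> simp [h]
    have : (fun y => F1 (x, y)) = fun y => if y < x then (1:ℝ) else 0 := rfl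
    rw [this, integral_mixLaw S h0 h1 _ hint, unif_ind x hx]
  have hinner2 : ∀ x ∈ Set.Icc (0:ℝ) 1,
      ∫ y, F2 (x, y) ∂μ = S * max x 0 + (1-S) * (x^2/2) := by
    intro x hx
    have hint : Integrable (fun y => max (x - y) 0) (volume.restrict (Set.Ioc (0:ℝ) 1)) :=
      Continuous.integrableOn_Ioc (by fun_prop)
    have : (fun y => F2 (x, y)) = fun y => max (x - y) 0 := rfl
    rw [this, integral_mixLaw S h0 h1 _ hint, unif_max x hx, sub_zero]
  -- the two product integrals
  have intF1 : Integrable F1 (μ.prod μ) := by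
    refine integrable_of_bdd mF1.aestronglyMeasurable (C := 1) (ae_of_all _ fun p => ?_)
    by_cases h : p.2 < p.1 <;> simp [hF1, h]
  have intF2 : Integrable F2 (μ.prod μ) := by
    refine integrable_of_bdd mF2.aestronglyMeasurable (C := 1) (haeP.mono fun p hp => ?_)
    obtain ⟨⟨_, hp1⟩, ⟨hp2, _⟩⟩ := hp
    rw [hF2, abs_of_nonneg (le_max_right _ _)]
    exact max_le (by linarith) (by norm_num)
  have houter1 : Integrable (fun x => ∫ y, F1 (x, y) ∂μ) (volume.restrict (Set.Ioc (0:ℝ) 1)) := by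
    refine integrable_of_bdd (mF1.stronglyMeasurable.integral_prod_right').aestronglyMeasurable
      (C := 1) (ae_of_all _ fun x => ?_)
    refine abs_integral_le_one (ae_of_all _ fun y => ?_)
    by_cases h : y < x <;> simp [hF1, h]
  have houter2 : Integrable (fun x => ∫ y, F2 (x, y) ∂μ) (volume.restrict (Set.Ioc (0:ℝ) 1)) := by
    refine integrable_of_bdd (mF2.stronglyMeasurable.integral_prod_right').aestronglyMeasurable
      (C := 1) ((ae_restrict_mem measurableSet_Ioc).mono fun x hx => ?_)
    refine abs_integral_le_one ((mixLaw_ae_Icc S).mono fun y hy => ?_)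
    rw [hF2, abs_of_nonneg (le_max_right _ _)]
    exact max_le (by simp only; linarith [hx.2, hy.1]) (by norm_num)
  have hJ1 : ∫ p, F1 p ∂(μ.prod μ) = (1-S) * (S + (1-S)/2) := by
    rw [MeasureTheory.integral_prod _ intF1, integral_mixLaw S h0 h1 _ houter1]
    have h00 : ∫ y, F1 (0, y) ∂μ = 0 := by
      rw [hinner1 0 (by norm_num)]; norm_num
    have hcong : ∫ x in Set.Ioc (0:ℝ) 1, (∫ y, F1 (x, y) ∂μ)
        = ∫ x in Set.Ioc (0:ℝ) 1, (S + (1-S)*x) := by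
      refine setIntegral_congr_fun measurableSet_Ioc fun x hx => ?_
      rw [hinner1 x ⟨le_of_lt hx.1, hx.2⟩, if_pos hx.1, mul_one]
    rw [h00, hcong, unif_lin S]
    ring
  have hJ2 : ∫ p, F2 p ∂(μ.prod μ) = (1-S) * (S/2 + (1-S)/6) := by
    rw [MeasureTheory.integral_prod _ intF2, integral_mixLaw S h0 h1 _ houter2]
    have h00 : ∫ y, F2 (0, y) ∂μ = 0 := by
      rw [hinner2 0 (by norm_num)]; norm_num
    have hcong : ∫ x in Set.Ioc (0:ℝ) 1, (∫ y, F2 (x, y) ∂μ)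
        = ∫ x in Set.Ioc (0:ℝ) 1, (S*x + (1-S)*(x^2/2)) := by
      refine setIntegral_congr_fun measurableSet_Ioc fun x hx => ?_
      rw [hinner2 x ⟨le_of_lt hx.1, hx.2⟩, max_eq_left (le_of_lt hx.1)]
    rw [h00, hcong, unif_quad S]
    ring
  -- integrability of X1 - X2
  have hid : Integrable (id : ℝ → ℝ) μ := by
    refine integrable_of_bdd (C := 1) aestronglyMeasurable_id ((mixLaw_ae_Icc S).mono fun x hx => ?_)
    simp only [id_eq]
    exact abs_le.mpr ⟨by linarith [hx.1], hx.2⟩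
  have hiX1 : Integrable X1 ℙ := by
    have h := (integrable_map_measure aestronglyMeasurable_id hX1.aemeasurable).mp
      (by rw [hL1]; exact hid)
    simpa [Function.comp] using h
  have hiX2 : Integrable X2 ℙ := by
    have h := (integrable_map_measure aestronglyMeasurable_id hX2.aemeasurable).mp
      (by rw [hL2]; exact hid)
    simpa [Function.comp] using h
  have hintX : Integrable (fun ω => X1 ω - X2 ω) ℙ := hiX1.sub hiX2
  have hEzero : ∫ ω, (X1 ω - X2 ω) ∂ℙ = 0 := by
    rw [integral_sub hiX1 hiX2]
    have e1 : ∫ ω, X1 ω ∂ℙ = ∫ x, x ∂μ := by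
      rw [← hL1]
      exact (integral_map hX1.aemeasurable aestronglyMeasurable_id).symm
    have e2 : ∫ ω, X2 ω ∂ℙ = ∫ x, x ∂μ := by
      rw [← hL2]
      exact (integral_map hX2.aemeasurable aestronglyMeasurable_id).symm
    rw [e1, e2, sub_self]
  -- probability of A
  have hPA : (ℙ A).toReal = (1-S) * (S + (1-S)/2) := by
    have key1 : ∫ ω, F1 (T ω) ∂ℙ = ∫ p, F1 p ∂(μ.prod μ) := by
      rw [← hT, integral_map hTm.aemeasurable mF1.aestronglyMeasurable]
    have hcomp : A.indicator (fun _ => (1:ℝ)) = fun ω => F1 (T ω) := by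
      funext ω
      by_cases h : X2 ω < X1 ω <;>
        simp [Set.indicator_apply, hAdef, hF1, hTdef, h]
    rw [← measureReal_def, ← integral_indicator_one hAm]
    calc ∫ ω, A.indicator 1 ω ∂ℙ = ∫ ω, F1 (T ω) ∂ℙ := by rw [← hcomp]; rfl
      _ = (1-S) * (S + (1-S)/2) := by rw [key1, hJ1]
  -- set integral over A
  have hIA : ∫ ω in A, (X1 ω - X2 ω) ∂ℙ = (1-S) * (S/2 + (1-S)/6) := by
    have key2 : ∫ p in U, (p.1 - p.2) ∂(μ.prod μ) = ∫ ω in A, (X1 ω - X2 ω) ∂ℙ := by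
      rw [← hT, setIntegral_map (f := fun p : ℝ × ℝ => p.1 - p.2) hUm
        (measurable_fst.sub measurable_snd).aestronglyMeasurable hTm.aemeasurable]
      rfl
    have key3 : ∫ p in U, (p.1 - p.2) ∂(μ.prod μ) = ∫ p, F2 p ∂(μ.prod μ) := by
      rw [← integral_indicator hUm]
      congr 1
      funext p
      by_cases h : p.2 < p.1
      · simp [Set.indicator_apply, hUdef, hF2, h,
          max_eq_left (by linarith : (0:ℝ) ≤ p.1 - p.2)]
      · push_neg at h
        simp [Set.indicator_apply, hUdef, hF2, not_lt.mpr h,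
          max_eq_right (by linarith : p.1 - p.2 ≤ 0)]
    rw [← key2, key3, hJ2]
  have hIAc : ∫ ω in Aᶜ, (X1 ω - X2 ω) ∂ℙ = -((1-S) * (S/2 + (1-S)/6)) := by
    have := integral_add_compl hAm hintX
    rw [hEzero, hIA] at this
    linarith
  have hPAc : (ℙ Aᶜ).toReal = 1 - (1-S) * (S + (1-S)/2) := by
    rw [measure_compl hAm (measure_ne_top _ _), measure_univ,
      ENNReal.toReal_sub_of_le prob_le_one (by simp), ENNReal.toReal_one, hPA]
  -- conditional integrals
  have condInt : ∀ s : Set Ω, ∫ ω, (X1 ω - X2 ω) ∂(ℙ[|s])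
      = ((ℙ s).toReal)⁻¹ * ∫ ω in s, (X1 ω - X2 ω) ∂ℙ := by
    intro s
    rw [ProbabilityTheory.cond, integral_smul_measure, ENNReal.toReal_inv, smul_eq_mul]
  rw [hAc, condInt A, condInt Aᶜ, hPA, hPAc, hIA, hIAc]
  have hp1 : (1:ℝ) + S > 0 := by linarith
  have hp2 : (1:ℝ) + S^2 > 0 := by positivity
  have hp3 : (1-S) * (S + (1-S)/2) = (1-S^2)/2 := by ring
  have hp4 : 1 - (1-S^2)/2 = (1+S^2)/2 := by ring
  rw [hp3, hp4]
  have hne0 : (1:ℝ) - S^2 ≠ 0 := by nlinarith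
  have hne3 : (1:ℝ) - S ≠ 0 := by linarith
  have hneA : (1:ℝ) + S ≠ 0 := by linarith
  have hneB : (1:ℝ) + S^2 ≠ 0 := by positivity
  have hfac : (1:ℝ) - S^2 = (1-S)*(1+S) := by ring
  rw [hfac]
  field_simp
  ring
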